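/- Let E_o, E_r ∈ ℂ with |E_r| > |E_o|, δ ∈ ℝ with e^{jδ} ≠ 1, E_{I,1} = |E_r + E_o|^2, E_{I,2} = |e^{jδ}E_r + E_o|^2, Q = 2|sin(δ/2)| |E_r|, s_1 = (E_{I,1} - E_{I,2})/(2Q^2), and s_2 = √((E_{I,1}+E_{I,2})/(2Q^2) - (E_{I,1}-E_{I,2})^2/(4Q^4) - 1/4). Then, assuming the correct branch (i.e., the intersection closer to the origin), E_o = [(1 - e^{jδ})(s_1 - j s_2) - (e^{jδ}+1)/2] E_r. -/

import Mathlib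

open Complex Real

/-- Geometric recovery of the object wave from two holograms (intersection of two circles,
    branch closer to the origin encoded by the sign of the imaginary part in the rotated frame). -/
theorem stmt_3 (Eo Er : ℂ) (δ : ℝ)
    (hmod : ‖Er‖ > ‖Eo‖)
    (hδ : Complex.exp (δ * Complex.I) ≠ 1)
    (EI1 EI2 Q s1 s2 : ℝ)
    (hEI1 : EI1 = (‖Er + Eo‖)^2)
    (hEI2 : EI2 = (‖Complex.exp (δ * Complex.I) * Er + Eo‖)^2)
    (hQ : Q = 2 * |Real.sin (δ / 2)| * ‖Er‖)
    (hs1 : s1 = (EI1 - EI2) / (2 * Q^2))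
    (hs2 : s2 = Real.sqrt ((EI1 + EI2) / (2 * Q^2) - (EI1 - EI2)^2 / (4 * Q^4) - 1/4))
    (hbranch :
      ((Eo / Er + (Complex.exp (δ * Complex.I) + 1) / 2) /
        (1 - Complex.exp (δ * Complex.I))).im ≤ 0) :
    Eo = ((1 - Complex.exp (δ * Complex.I)) * ((s1 : ℂ) - (s2 : ℂ) * Complex.I) -
          (Complex.exp (δ * Complex.I) + 1) / 2) * Er := by
  set w := Complex.exp (δ * Complex.I) with hw
  have hEr : Er ≠ 0 := by
    intro h
    rw [h] at hmod
    simp at hmod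
    exact absurd hmod (not_lt.mpr (norm_nonneg Eo))
  have h1w : (1 : ℂ) - w ≠ 0 := sub_ne_zero.mpr (Ne.symm hδ)
  set u := (Eo / Er + (w + 1) / 2) / (1 - w) with hu
  have hEo : Eo = ((1 - w) * u - (w + 1) / 2) * Er := by
    rw [hu]; field_simp; ring
  -- |1-w|^2 = 4 sin(δ/2)^2
  have habs1w : ‖1 - w‖ ^ 2 = 4 * Real.sin (δ / 2) ^ 2 := by
    rw [Complex.sq_norm, Complex.normSq_apply]
    simp [hw, Complex.exp_ofReal_mul_I_re, Complex.exp_ofReal_mul_I_im]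
    have h1 : Real.cos δ = 2 * Real.cos (δ/2)^2 - 1 := by
      rw [← Real.cos_two_mul]; ring_nf
    have h2 : Real.sin δ = 2 * Real.sin (δ/2) * Real.cos (δ/2) := by
      rw [← Real.sin_two_mul]; ring_nf
    rw [h1, h2]
    linear_combination (4 * (Real.cos (δ/2)^2 - 1)) * (Real.sin_sq_add_cos_sq (δ/2))
  have hQ2 : Q ^ 2 = ‖1 - w‖ ^ 2 * ‖Er‖ ^ 2 := by
    rw [hQ, habs1w]
    rw [mul_pow, mul_pow]
    rw [_root_.sq_abs]
    ring
  have hQpos : Q > 0 := by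
    have h1 : ‖1 - w‖ > 0 := norm_pos_iff.mpr h1w
    have h2 : ‖Er‖ > 0 := norm_pos_iff.mpr hEr
    have hQsq : Q ^ 2 > 0 := by rw [hQ2]; positivity
    have hQnn : Q ≥ 0 := by rw [hQ]; positivity
    nlinarith
  have hB1 : ‖u + 1/2‖ ^ 2 = (u.re + 1/2)^2 + u.im^2 := by
    rw [Complex.sq_norm, Complex.normSq_apply]
    simp
    ring
  have hB2 : ‖u - 1/2‖ ^ 2 = (u.re - 1/2)^2 + u.im^2 := by
    rw [Complex.sq_norm, Complex.normSq_apply]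
    simp
    ring
  have hr1 : Er + Eo = (1 - w) * ((u + 1/2) * Er) := by rw [hEo]; ring
  have hr2 : w * Er + Eo = (1 - w) * ((u - 1/2) * Er) := by rw [hEo]; ring
  have hEI1' : EI1 = Q ^ 2 * ((u.re + 1/2)^2 + u.im^2) := by
    rw [hEI1, hr1, norm_mul, norm_mul, mul_pow, mul_pow, hB1, hQ2]; ring
  have hEI2' : EI2 = Q ^ 2 * ((u.re - 1/2)^2 + u.im^2) := by
    rw [hEI2, hr2, norm_mul, norm_mul, mul_pow, mul_pow, hB2, hQ2]; ring
  have hQne : Q ≠ 0 := ne_of_gt hQpos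
  have hs1' : s1 = u.re := by
    rw [hs1, hEI1', hEI2']
    field_simp
    ring
  have hs2' : s2 = -u.im := by
    have harg : (EI1 + EI2) / (2 * Q^2) - (EI1 - EI2)^2 / (4 * Q^4) - 1/4 = u.im ^ 2 := by
      rw [hEI1', hEI2']
      field_simp
      ring
    rw [hs2, harg, Real.sqrt_sq_eq_abs, abs_of_nonpos hbranch]
  have huC : ((u.re : ℂ) - ((-u.im : ℝ) : ℂ) * Complex.I) = u := by
    push_cast
    rw [neg_mul, sub_neg_eq_add, Complex.re_add_im]
  rw [hs1', hs2', huC]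
  exact hEo
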